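/- Let G be a connected finite simple graph on the vertex set {1,…,n} with m edges. Then ara_c(J_G) = m, i.e., the J_G-complete arithmetical rank of the binomial edge ideal J_G equals the number of edges of G. -/

import Mathlib

open MvPolynomial

noncomputable section

/-- `f_{pq} = x_p · x_{n+q} − x_q · x_{n+p}` in `K[x_1,…,x_{2n}]`, where the first `n`
variables are indexed by `Fin.castAdd n` and the last `n` variables by `Fin.natAdd n`. -/
def edgeBinomial (K : Type*) [Field K] (n : ℕ) (p q : Fin n) :
    MvPolynomial (Fin (n + n)) K :=
  X (Fin.castAdd n p) * X (Fin.natAdd n q) - X (Fin.castAdd n q) * X (Fin.natAdd n p)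

/-- The binomial edge ideal `J_G` of a graph `G` on the vertex set `{1,…,n}`. -/
def binomialEdgeIdeal (K : Type*) [Field K] {n : ℕ} (G : SimpleGraph (Fin n)) :
    Ideal (MvPolynomial (Fin (n + n)) K) :=
  Ideal.span {f | ∃ p q : Fin n, p < q ∧ G.Adj p q ∧ f = edgeBinomial K n p q}

/-- A binomial is a difference of two monomials. -/
def IsBinomial {K : Type*} [Field K] {m : ℕ} (f : MvPolynomial (Fin m) K) : Prop :=
  ∃ u v : Fin m →₀ ℕ, f = monomial u (1 : K) - monomial v 1

/-- The arithmetical rank: the smallest `s` such that there are `s` polynomials in `I`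
generating `I` up to radical. -/
def ara {K : Type*} [Field K] {m : ℕ} (I : Ideal (MvPolynomial (Fin m) K)) : ℕ :=
  sInf {s | ∃ F : Fin s → MvPolynomial (Fin m) K,
    (∀ i, F i ∈ I) ∧ (Ideal.span (Set.range F)).radical = I.radical}

/-- The binomial arithmetical rank: the smallest `s` such that there are `s` binomials in `I`
generating `I` up to radical. -/
def bar {K : Type*} [Field K] {m : ℕ} (I : Ideal (MvPolynomial (Fin m) K)) : ℕ :=
  sInf {s | ∃ B : Fin s → MvPolynomial (Fin m) K,
    (∀ i, IsBinomial (B i)) ∧ (∀ i, B i ∈ I) ∧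
    (Ideal.span (Set.range B)).radical = I.radical}

/-- A polynomial `F` is `I`-complete if for any two monomials `M, N` occurring in `F`
with nonzero coefficient, `M − N ∈ I`. -/
def IsCompletePolynomial {K : Type*} [Field K] {m : ℕ} (I : Ideal (MvPolynomial (Fin m) K))
    (F : MvPolynomial (Fin m) K) : Prop :=
  ∀ u ∈ F.support, ∀ v ∈ F.support, (monomial u (1 : K) - monomial v 1) ∈ I

/-- The `I`-complete arithmetical rank: the smallest `s` such that there are `s`
`I`-complete polynomials in `I` generating `I` up to radical. -/
def araC {K : Type*} [Field K] {m : ℕ} (I : Ideal (MvPolynomial (Fin m) K)) : ℕ :=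
  sInf {s | ∃ F : Fin s → MvPolynomial (Fin m) K,
    (∀ i, F i ∈ I ∧ IsCompletePolynomial I (F i)) ∧
    (Ideal.span (Set.range F)).radical = I.radical}

namespace Stmt5Aux

variable {K : Type*} [Field K] {n : ℕ}

def xv (n : ℕ) (p : Fin n) : Fin (n + n) := Fin.castAdd n p
def yv (n : ℕ) (p : Fin n) : Fin (n + n) := Fin.natAdd n p

@[simp] lemma xv_eq_iff {p r : Fin n} : xv n p = xv n r ↔ p = r := by
  constructor
  · intro h
    have := congrArg Fin.val h
    simp only [xv, Fin.coe_castAdd] at this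
    exact Fin.ext this
  · rintro rfl; rfl

@[simp] lemma yv_eq_iff {p r : Fin n} : yv n p = yv n r ↔ p = r := by
  constructor
  · intro h
    have := congrArg Fin.val h
    simp only [yv, Fin.coe_natAdd] at this
    exact Fin.ext (by omega)
  · rintro rfl; rfl

@[simp] lemma xv_ne_yv (p q : Fin n) : ¬ (xv n p = yv n q) := by
  intro h
  have := congrArg Fin.val h
  have hp := p.isLt
  simp only [xv, yv, Fin.coe_castAdd, Fin.coe_natAdd] at this
  omega

@[simp] lemma yv_ne_xv (p q : Fin n) : ¬ (yv n p = xv n q) := fun h => xv_ne_yv q p h.symm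


/-- exponent vector of the monomial `x_p y_q` -/
def mA (n : ℕ) (p q : Fin n) : Fin (n + n) →₀ ℕ :=
  Finsupp.single (xv n p) 1 + Finsupp.single (yv n q) 1

lemma mA_apply_xv (p q r : Fin n) : mA n p q (xv n r) = if p = r then 1 else 0 := by
  simp [mA, Finsupp.single_apply]

lemma mA_apply_yv (p q r : Fin n) : mA n p q (yv n r) = if q = r then 1 else 0 := by
  simp [mA, Finsupp.single_apply]

lemma mA_apply_ne {p q : Fin n} {i : Fin (n + n)} (h1 : i ≠ xv n p) (h2 : i ≠ yv n q) :
    mA n p q i = 0 := by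
  simp [mA, Finsupp.single_apply, Ne.symm h1, Ne.symm h2]

lemma edgeBinomial_eq (p q : Fin n) :
    edgeBinomial K n p q = monomial (mA n p q) 1 - monomial (mA n q p) 1 := by
  have hX : ∀ (i j : Fin (n + n)),
      (X i * X j : MvPolynomial (Fin (n + n)) K)
        = monomial (Finsupp.single i 1 + Finsupp.single j 1) 1 := by
    intro i j
    rw [X, X, monomial_mul, one_mul]
  rw [edgeBinomial, hX, hX]
  rfl

/-- the move relation on exponent vectors -/
def Rel (G : SimpleGraph (Fin n)) (u v : Fin (n + n) →₀ ℕ) : Prop :=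
  ∃ (p q : Fin n) (w : Fin (n + n) →₀ ℕ), p < q ∧ G.Adj p q ∧ u = w + mA n p q ∧ v = w + mA n q p

variable (G : SimpleGraph (Fin n))

lemma rel_add_left (u : Fin (n + n) →₀ ℕ) {a b : Fin (n + n) →₀ ℕ} (h : Rel G a b) :
    Rel G (u + a) (u + b) := by
  obtain ⟨p, q, w, h1, h2, rfl, rfl⟩ := h
  exact ⟨p, q, u + w, h1, h2, (add_assoc u w _).symm, (add_assoc u w _).symm⟩

def shiftCls (u : Fin (n + n) →₀ ℕ) : Quot (Rel G) → Quot (Rel G) :=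
  Quot.map (u + ·) (fun _ _ h => rel_add_left G u h)

lemma shiftCls_mk (u v : Fin (n + n) →₀ ℕ) :
    shiftCls G u (Quot.mk (Rel G) v) = Quot.mk (Rel G) (u + v) := rfl

variable (K)

def phi : MvPolynomial (Fin (n + n)) K →ₗ[K] (Quot (Rel G) →₀ K) :=
  (basisMonomials (Fin (n + n)) K).constr K fun u => Finsupp.single (Quot.mk (Rel G) u) 1

lemma phi_monomial (u : Fin (n + n) →₀ ℕ) (c : K) :
    phi K G (monomial u c) = Finsupp.single (Quot.mk (Rel G) u) c := by
  have h1 : (monomial u c : MvPolynomial (Fin (n + n)) K)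
      = c • (basisMonomials (Fin (n + n)) K u) := by
    have : (basisMonomials (Fin (n + n)) K) u = monomial u (1 : K) := rfl
    rw [this, smul_monomial, smul_eq_mul, mul_one]
  rw [h1, map_smul, phi, Module.Basis.constr_basis, Finsupp.smul_single, smul_eq_mul, mul_one]

lemma phi_monomial_mul (u : Fin (n + n) →₀ ℕ) (c : K) (F : MvPolynomial (Fin (n + n)) K) :
    phi K G (monomial u c * F) = c • Finsupp.mapDomain (shiftCls G u) (phi K G F) := by
  have h : (phi K G).comp (LinearMap.mulLeft K (monomial u c)) =
      c • (Finsupp.lmapDomain K K (shiftCls G u)).comp (phi K G) := by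
    apply Module.Basis.ext (basisMonomials (Fin (n + n)) K)
    intro v
    have hb : (basisMonomials (Fin (n + n)) K) v = monomial v (1 : K) := rfl
    simp only [LinearMap.comp_apply, LinearMap.mulLeft_apply, LinearMap.smul_apply, hb]
    rw [monomial_mul, mul_one, phi_monomial, phi_monomial, Finsupp.lmapDomain_apply,
      Finsupp.mapDomain_single, shiftCls_mk, Finsupp.smul_single, smul_eq_mul, mul_one]
  have := LinearMap.congr_fun h F
  simpa [Finsupp.lmapDomain_apply] using this

lemma phi_zero_of_mem {F : MvPolynomial (Fin (n + n)) K} (hF : F ∈ binomialEdgeIdeal K G) :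
    phi K G F = 0 := by
  refine Submodule.span_induction (p := fun x _ => phi K G x = 0) ?_ ?_ ?_ ?_ hF
  · rintro x ⟨p, q, hpq, hadj, rfl⟩
    rw [edgeBinomial_eq, map_sub, phi_monomial, phi_monomial]
    have : Quot.mk (Rel G) (mA n p q) = Quot.mk (Rel G) (mA n q p) :=
      Quot.sound ⟨p, q, 0, hpq, hadj, (zero_add _).symm, (zero_add _).symm⟩
    rw [this, sub_self]
  · exact map_zero _
  · intro x y _ _ hx hy; rw [map_add, hx, hy, add_zero]
  · intro a x _ hx
    rw [smul_eq_mul]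
    conv_lhs => rw [as_sum a]
    rw [Finset.sum_mul, map_sum]
    refine Finset.sum_eq_zero fun v _ => ?_
    rw [phi_monomial_mul, hx]
    simp

lemma eqv_of_mem_sub {u v : Fin (n + n) →₀ ℕ}
    (h : (monomial u 1 - monomial v 1 : MvPolynomial (Fin (n + n)) K) ∈ binomialEdgeIdeal K G) :
    Relation.EqvGen (Rel G) u v := by
  have h0 := phi_zero_of_mem K G h
  rw [map_sub, phi_monomial, phi_monomial] at h0
  rw [← Quot.eq (r := Rel G)]
  by_contra he
  have h1 := DFunLike.congr_fun h0 (Quot.mk (Rel G) u)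
  rw [Finsupp.sub_apply, Finsupp.single_eq_same, Finsupp.single_eq_of_ne' (Ne.symm he),
    sub_zero, Finsupp.zero_apply] at h1
  exact one_ne_zero h1

lemma not_monomial_mem {v : Fin (n + n) →₀ ℕ} {c : K} (hc : c ≠ 0) :
    monomial v c ∉ binomialEdgeIdeal K G := by
  intro h
  have h0 := phi_zero_of_mem K G h
  rw [phi_monomial] at h0
  have h1 := DFunLike.congr_fun h0 (Quot.mk (Rel G) v)
  rw [Finsupp.single_eq_same, Finsupp.zero_apply] at h1
  exact hc h1

lemma mem_of_eqv {u v : Fin (n + n) →₀ ℕ} (h : Relation.EqvGen (Rel G) u v) :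
    (monomial u 1 - monomial v 1 : MvPolynomial (Fin (n + n)) K) ∈ binomialEdgeIdeal K G := by
  induction h with
  | rel x y hxy =>
    obtain ⟨p, q, w, h1, h2, rfl, rfl⟩ := hxy
    have heq : (monomial (w + mA n p q) 1 - monomial (w + mA n q p) 1 :
        MvPolynomial (Fin (n + n)) K) = monomial w 1 * edgeBinomial K n p q := by
      rw [edgeBinomial_eq, mul_sub, monomial_mul, monomial_mul, one_mul]
    rw [heq]
    exact Ideal.mul_mem_left _ _ (Ideal.subset_span ⟨p, q, h1, h2, rfl⟩)
  | refl x => simp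
  | symm x y _ ih =>
    rw [show (monomial y 1 - monomial x 1 : MvPolynomial (Fin (n + n)) K)
      = -(monomial x 1 - monomial y 1) by ring]
    exact (binomialEdgeIdeal K G).neg_mem ih
  | trans x y z _ _ ih1 ih2 =>
    rw [show (monomial x 1 - monomial z 1 : MvPolynomial (Fin (n + n)) K)
      = (monomial x 1 - monomial y 1) + (monomial y 1 - monomial z 1) by ring]
    exact Ideal.add_mem _ ih1 ih2


def InS (p q : Fin n) (a b : ℕ) (u : Fin (n + n) →₀ ℕ) : Prop :=
  (∀ i, i ≠ xv n p → i ≠ xv n q → i ≠ yv n p → i ≠ yv n q → u i = 0) ∧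
  u (xv n q) = u (yv n p) ∧ u (xv n p) + u (xv n q) = a ∧ u (yv n p) + u (yv n q) = b

def corner (p q : Fin n) (a b : ℕ) : Fin (n + n) →₀ ℕ :=
  Finsupp.single (xv n p) a + Finsupp.single (yv n q) b

lemma corner_apply_xp (p q : Fin n) (a b : ℕ) : corner p q a b (xv n p) = a := by
  rw [corner, Finsupp.add_apply, Finsupp.single_eq_same, Finsupp.single_eq_of_ne' (yv_ne_xv q p),
    add_zero]

lemma corner_apply_yq (p q : Fin n) (a b : ℕ) : corner p q a b (yv n q) = b := by
  rw [corner, Finsupp.add_apply, Finsupp.single_eq_same, Finsupp.single_eq_of_ne' (xv_ne_yv p q),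
    zero_add]

lemma corner_apply_ne {p q : Fin n} {a b : ℕ} {i : Fin (n + n)}
    (h1 : i ≠ xv n p) (h2 : i ≠ yv n q) : corner p q a b i = 0 := by
  rw [corner, Finsupp.add_apply, Finsupp.single_eq_of_ne' (Ne.symm h1),
    Finsupp.single_eq_of_ne' (Ne.symm h2), add_zero]

lemma eq_corner_of {p q : Fin n} {w : Fin (n + n) →₀ ℕ}
    (h0 : ∀ i, i ≠ xv n p → i ≠ yv n q → w i = 0) :
    w = corner p q (w (xv n p)) (w (yv n q)) := by
  ext i
  rcases eq_or_ne i (xv n p) with rfl | h1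
  · rw [corner_apply_xp]
  rcases eq_or_ne i (yv n q) with rfl | h2
  · rw [corner_apply_yq]
  · rw [corner_apply_ne h1 h2, h0 i h1 h2]

lemma InS_corner {p q : Fin n} (hpq : p ≠ q) (a b : ℕ) : InS p q a b (corner p q a b) := by
  have hxq : corner p q a b (xv n q) = 0 :=
    corner_apply_ne (by simp [Ne.symm hpq]) (by simp) (a := a) (b := b)
  have hyp : corner p q a b (yv n p) = 0 :=
    corner_apply_ne (by simp) (by simp [hpq]) (a := a) (b := b)
  refine ⟨fun i hi1 _ _ hi4 => corner_apply_ne hi1 hi4, ?_, ?_, ?_⟩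
  · rw [hxq, hyp]
  · rw [hxq, corner_apply_xp, add_zero]
  · rw [hyp, corner_apply_yq, zero_add]

lemma move_id {p q p' q' : Fin n} (hpq : p < q) (hp'q' : p' < q')
    (hp : p' = p ∨ p' = q) (hq : q' = p ∨ q' = q) : p' = p ∧ q' = q := by
  rcases hp with rfl | rfl <;> rcases hq with rfl | rfl
  · exact absurd hp'q' (lt_irrefl _)
  · exact ⟨rfl, rfl⟩
  · exact absurd (hpq.trans hp'q') (lt_irrefl _)
  · exact absurd hp'q' (lt_irrefl _)

lemma InS_move {p q : Fin n} {a b : ℕ} (hpq : p < q) (w : Fin (n + n) →₀ ℕ) :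
    InS p q a b (w + mA n p q) ↔ InS p q a b (w + mA n q p) := by
  have hne : ¬ p = q := ne_of_lt hpq
  have e1 : (w + mA n p q) (xv n p) = w (xv n p) + 1 := by
    rw [Finsupp.add_apply, mA_apply_xv, if_pos rfl]
  have e2 : (w + mA n p q) (xv n q) = w (xv n q) := by
    rw [Finsupp.add_apply, mA_apply_xv, if_neg hne, add_zero]
  have e3 : (w + mA n p q) (yv n p) = w (yv n p) := by
    rw [Finsupp.add_apply, mA_apply_yv, if_neg (Ne.symm hne), add_zero]
  have e4 : (w + mA n p q) (yv n q) = w (yv n q) + 1 := by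
    rw [Finsupp.add_apply, mA_apply_yv, if_pos rfl]
  have f1 : (w + mA n q p) (xv n p) = w (xv n p) := by
    rw [Finsupp.add_apply, mA_apply_xv, if_neg (Ne.symm hne), add_zero]
  have f2 : (w + mA n q p) (xv n q) = w (xv n q) + 1 := by
    rw [Finsupp.add_apply, mA_apply_xv, if_pos rfl]
  have f3 : (w + mA n q p) (yv n p) = w (yv n p) + 1 := by
    rw [Finsupp.add_apply, mA_apply_yv, if_pos rfl]
  have f4 : (w + mA n q p) (yv n q) = w (yv n q) := by
    rw [Finsupp.add_apply, mA_apply_yv, if_neg hne, add_zero]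
  constructor
  · rintro ⟨hoff, h1, h2, h3⟩
    refine ⟨fun i hi1 hi2 hi3 hi4 => ?_, ?_, ?_, ?_⟩
    · have h := hoff i hi1 hi2 hi3 hi4
      rw [Finsupp.add_apply, mA_apply_ne hi1 hi4] at h
      rw [Finsupp.add_apply, mA_apply_ne hi2 hi3, add_zero]
      omega
    · rw [f2, f3]; rw [e2, e3] at h1; omega
    · rw [f1, f2]; rw [e1, e2] at h2; rw [e2, e3] at h1; omega
    · rw [f3, f4]; rw [e3, e4] at h3; rw [e2, e3] at h1; omega
  · rintro ⟨hoff, h1, h2, h3⟩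
    refine ⟨fun i hi1 hi2 hi3 hi4 => ?_, ?_, ?_, ?_⟩
    · have h := hoff i hi1 hi2 hi3 hi4
      rw [Finsupp.add_apply, mA_apply_ne hi2 hi3] at h
      rw [Finsupp.add_apply, mA_apply_ne hi1 hi4, add_zero]
      omega
    · rw [e2, e3]; rw [f2, f3] at h1; omega
    · rw [e1, e2]; rw [f1, f2] at h2; rw [f2, f3] at h1; omega
    · rw [e3, e4]; rw [f3, f4] at h3; rw [f2, f3] at h1; omega

lemma InS_rel_fwd {G : SimpleGraph (Fin n)} {p q : Fin n} {a b : ℕ}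
    {u v : Fin (n + n) →₀ ℕ} (hpq : p < q) (hrel : Rel G u v)
    (hu : InS p q a b u) : InS p q a b v := by
  obtain ⟨p', q', w, hp'q', _, rfl, rfl⟩ := hrel
  have hup : (w + mA n p' q') (xv n p') ≠ 0 := by
    rw [Finsupp.add_apply, mA_apply_xv, if_pos rfl]; omega
  have huq : (w + mA n p' q') (yv n q') ≠ 0 := by
    rw [Finsupp.add_apply, mA_apply_yv, if_pos rfl]; omega
  have hp' : p' = p ∨ p' = q := by
    by_contra h
    push_neg at h
    exact hup (hu.1 (xv n p') (by simp [h.1]) (by simp [h.2]) (by simp) (by simp))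
  have hq' : q' = p ∨ q' = q := by
    by_contra h
    push_neg at h
    exact huq (hu.1 (yv n q') (by simp) (by simp) (by simp [h.1]) (by simp [h.2]))
  obtain ⟨rfl, rfl⟩ := move_id hpq hp'q' hp' hq'
  exact (InS_move hpq w).mp hu

lemma InS_rel_bwd {G : SimpleGraph (Fin n)} {p q : Fin n} {a b : ℕ}
    {u v : Fin (n + n) →₀ ℕ} (hpq : p < q) (hrel : Rel G u v)
    (hv : InS p q a b v) : InS p q a b u := by
  obtain ⟨p', q', w, hp'q', _, rfl, rfl⟩ := hrel
  have hup : (w + mA n q' p') (xv n q') ≠ 0 := by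
    rw [Finsupp.add_apply, mA_apply_xv, if_pos rfl]; omega
  have huq : (w + mA n q' p') (yv n p') ≠ 0 := by
    rw [Finsupp.add_apply, mA_apply_yv, if_pos rfl]; omega
  have hq' : q' = p ∨ q' = q := by
    by_contra h
    push_neg at h
    exact hup (hv.1 (xv n q') (by simp [h.1]) (by simp [h.2]) (by simp) (by simp))
  have hp' : p' = p ∨ p' = q := by
    by_contra h
    push_neg at h
    exact huq (hv.1 (yv n p') (by simp) (by simp) (by simp [h.1]) (by simp [h.2]))
  obtain ⟨rfl, rfl⟩ := move_id hpq hp'q' hp' hq'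
  exact (InS_move hpq w).mpr hv

lemma InS_of_eqv {G : SimpleGraph (Fin n)} {p q : Fin n} {a b : ℕ}
    {u v : Fin (n + n) →₀ ℕ} (hpq : p < q) (h : Relation.EqvGen (Rel G) u v) :
    (InS p q a b u ↔ InS p q a b v) := by
  induction h with
  | rel x y hxy => exact ⟨InS_rel_fwd hpq hxy, InS_rel_bwd hpq hxy⟩
  | refl x => exact Iff.rfl
  | symm x y _ ih => exact ih.symm
  | trans x y z _ _ ih1 ih2 => exact ih1.trans ih2


lemma serve_of_corner {G : SimpleGraph (Fin n)} {F : MvPolynomial (Fin (n + n)) K}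
    {p q : Fin n} (hpq : p < q) (hF : F ∈ binomialEdgeIdeal K G)
    (hcomp : IsCompletePolynomial (binomialEdgeIdeal K G) F) {a b : ℕ}
    (hv : corner p q a b ∈ F.support) : 0 < a ∧ 0 < b := by
  by_contra hcon
  have hab : a = 0 ∨ b = 0 := by omega
  have hsupp : ∀ w ∈ F.support, w = corner p q a b := by
    intro w hw
    have heqv : Relation.EqvGen (Rel G) w (corner p q a b) :=
      eqv_of_mem_sub K G (hcomp w hw _ hv)
    have hS : InS p q a b w :=
      (InS_of_eqv hpq heqv).mpr (InS_corner (ne_of_lt hpq) a b)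
    obtain ⟨hoff, h1, h2, h3⟩ := hS
    have hr1 : w (xv n q) = 0 := by omega
    have hr2 : w (yv n p) = 0 := by omega
    have h0 : ∀ i, i ≠ xv n p → i ≠ yv n q → w i = 0 := by
      intro i hi1 hi2
      rcases eq_or_ne i (xv n q) with rfl | hi3
      · exact hr1
      rcases eq_or_ne i (yv n p) with rfl | hi4
      · exact hr2
      · exact hoff i hi1 hi3 hi4 hi2
    have hwc : w = corner p q (w (xv n p)) (w (yv n q)) := eq_corner_of h0
    have hwa : w (xv n p) = a := by omega
    have hwb : w (yv n q) = b := by omega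
    rw [hwc, hwa, hwb]
  have hFs : F.support = {corner p q a b} := Finset.eq_singleton_iff_unique_mem.mpr ⟨hv, hsupp⟩
  have hFm : F = monomial (corner p q a b) (coeff (corner p q a b) F) := by
    conv_lhs => rw [as_sum F]
    rw [hFs, Finset.sum_singleton]
  exact not_monomial_mem K G (mem_support_iff.mp hv) (hFm ▸ hF)

lemma pow_decomp (p q : Fin n) (hpq : p ≠ q) (k : ℕ) :
    ∃ g : MvPolynomial (Fin (n + n)) K,
      (edgeBinomial K n p q) ^ k = monomial (k • mA n p q) 1 + g ∧
      ∀ u ∈ g.support, 0 < u (yv n p) := by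
  classical
  induction k with
  | zero =>
    refine ⟨0, ?_, by simp⟩
    simp [zero_nsmul]
  | succ k ih =>
    obtain ⟨g, hg, hgy⟩ := ih
    have hyA : (mA n p q) (yv n p) = 0 := by rw [mA_apply_yv, if_neg (Ne.symm hpq)]
    have hyB : (mA n q p) (yv n p) = 1 := by rw [mA_apply_yv, if_pos rfl]
    refine ⟨monomial (mA n p q) 1 * g - monomial (mA n q p) 1 * monomial (k • mA n p q) 1
      - monomial (mA n q p) 1 * g, ?_, ?_⟩
    · rw [pow_succ, hg, edgeBinomial_eq, succ_nsmul,
        show (monomial (k • mA n p q + mA n p q) (1 : K))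
          = monomial (k • mA n p q) 1 * monomial (mA n p q) 1 by
            rw [monomial_mul, one_mul]]
      ring
    · intro u hu
      have h1 : ∀ y ∈ ((monomial (mA n p q)) (1 : K) * g).support, 0 < y (yv n p) := by
        intro y hy
        obtain ⟨c, hc, d, hd, rfl⟩ := Finset.mem_add.mp (support_mul _ _ hy)
        rw [support_monomial, if_neg (one_ne_zero (α := K)), Finset.mem_singleton] at hc
        subst hc
        rw [Finsupp.add_apply, hyA]
        have := hgy d hd
        omega
      have h2 : ∀ y ∈ ((monomial (mA n q p)) (1 : K)
          * monomial (k • mA n p q) 1).support, 0 < y (yv n p) := by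
        intro y hy
        obtain ⟨c, hc, d, hd, rfl⟩ := Finset.mem_add.mp (support_mul _ _ hy)
        rw [support_monomial, if_neg (one_ne_zero (α := K)), Finset.mem_singleton] at hc
        subst hc
        rw [Finsupp.add_apply, hyB]
        omega
      have h3 : ∀ y ∈ ((monomial (mA n q p)) (1 : K) * g).support, 0 < y (yv n p) := by
        intro y hy
        obtain ⟨c, hc, d, hd, rfl⟩ := Finset.mem_add.mp (support_mul _ _ hy)
        rw [support_monomial, if_neg (one_ne_zero (α := K)), Finset.mem_singleton] at hc
        subst hc
        rw [Finsupp.add_apply, hyB]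
        omega
      rcases Finset.mem_union.mp (support_sub _ _ _ hu) with hu1 | hu1
      · rcases Finset.mem_union.mp (support_sub _ _ _ hu1) with hu2 | hu2
        · exact h1 u hu2
        · exact h2 u hu2
      · exact h3 u hu1

lemma coeff_pow_corner {p q : Fin n} (hpq : p < q) (k : ℕ) :
    coeff (k • mA n p q) ((edgeBinomial K n p q) ^ k) = 1 := by
  classical
  obtain ⟨g, hg, hgy⟩ := pow_decomp (K := K) p q (ne_of_lt hpq) k
  rw [hg, coeff_add, coeff_monomial, if_pos rfl]
  have hzero : coeff (k • mA n p q) g = 0 := by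
    by_contra h
    have hy := hgy _ (mem_support_iff.mpr h)
    have hy0 : (k • mA n p q) (yv n p) = 0 := by
      rw [Finsupp.smul_apply, mA_apply_yv, if_neg (Ne.symm (ne_of_lt hpq)), smul_zero]
    omega
  rw [hzero, add_zero]

lemma exists_server {G : SimpleGraph (Fin n)} {s : ℕ}
    {F : Fin s → MvPolynomial (Fin (n + n)) K}
    (hF : ∀ i, F i ∈ binomialEdgeIdeal K G ∧
      IsCompletePolynomial (binomialEdgeIdeal K G) (F i))
    (hrad : (Ideal.span (Set.range F)).radical = (binomialEdgeIdeal K G).radical)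
    {p q : Fin n} (hpq : p < q) (hadj : G.Adj p q) :
    ∃ j a b, 0 < a ∧ 0 < b ∧ corner p q a b ∈ (F j).support := by
  classical
  have hmem : edgeBinomial K n p q ∈ (Ideal.span (Set.range F)).radical := by
    rw [hrad]
    exact Ideal.le_radical (Ideal.subset_span ⟨p, q, hpq, hadj, rfl⟩)
  obtain ⟨k, hk⟩ := Ideal.mem_radical_iff.mp hmem
  obtain ⟨c, hc⟩ := (Submodule.mem_span_range_iff_exists_fun _).mp hk
  have hcorner : (k • mA n p q) ∈ (∑ i, c i • F i).support := by
    rw [hc, mem_support_iff, coeff_pow_corner K hpq k]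
    exact one_ne_zero
  obtain ⟨j, hj⟩ : ∃ j, (k • mA n p q) ∈ (c j • F j).support := by
    have hb := support_sum (s := Finset.univ) (f := fun i => c i • F i) hcorner
    obtain ⟨j, _, hj⟩ := Finset.mem_biUnion.mp hb
    exact ⟨j, hj⟩
  rw [smul_eq_mul] at hj
  obtain ⟨y, hy, z, hz, hyz⟩ := Finset.mem_add.mp (support_mul _ _ hj)
  have hoffz : ∀ i, i ≠ xv n p → i ≠ yv n q → z i = 0 := by
    intro i hi1 hi2
    have h1 : y i + z i = (k • mA n p q) i := by rw [← hyz, Finsupp.add_apply]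
    have h2 : (k • mA n p q) i = 0 := by
      rw [Finsupp.smul_apply, mA_apply_ne hi1 hi2, smul_zero]
    omega
  have hz' : z = corner p q (z (xv n p)) (z (yv n q)) := eq_corner_of hoffz
  rw [hz'] at hz
  obtain ⟨ha, hb⟩ := serve_of_corner K hpq (hF j).1 (hF j).2 hz
  exact ⟨j, _, _, ha, hb, hz⟩

lemma serve_unique {G : SimpleGraph (Fin n)} {F : MvPolynomial (Fin (n + n)) K}
    (hcomp : IsCompletePolynomial (binomialEdgeIdeal K G) F)
    {p q p' q' : Fin n} (hpq : p < q) (hp'q' : p' < q')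
    {a b a' b' : ℕ} (ha : 0 < a) (hb : 0 < b)
    (h1 : corner p q a b ∈ F.support) (h2 : corner p' q' a' b' ∈ F.support) :
    p = p' ∧ q = q' := by
  have heqv : Relation.EqvGen (Rel G) (corner p' q' a' b') (corner p q a b) :=
    eqv_of_mem_sub K G (hcomp _ h2 _ h1)
  have hS : InS p q a b (corner p' q' a' b') :=
    (InS_of_eqv hpq heqv).mpr (InS_corner (ne_of_lt hpq) a b)
  obtain ⟨hoff, hr, hsa, hsb⟩ := hS
  have hval : ∀ i, corner p' q' a' b' i ≠ 0 → i = xv n p' ∨ i = yv n q' := by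
    intro i hi
    by_contra h
    push_neg at h
    exact hi (corner_apply_ne h.1 h.2)
  rcases Nat.eq_zero_or_pos (corner p' q' a' b' (xv n q)) with hr0 | hrpos
  · have hyp0 : corner p' q' a' b' (yv n p) = 0 := by omega
    have hxppos : corner p' q' a' b' (xv n p) ≠ 0 := by omega
    have hyqpos : corner p' q' a' b' (yv n q) ≠ 0 := by omega
    constructor
    · rcases hval _ hxppos with h | h
      · exact xv_eq_iff.mp h
      · exact absurd h (xv_ne_yv _ _)
    · rcases hval _ hyqpos with h | h
      · exact absurd h (yv_ne_xv _ _)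
      · exact yv_eq_iff.mp h
  · exfalso
    have hxq : corner p' q' a' b' (xv n q) ≠ 0 := by omega
    have hyp : corner p' q' a' b' (yv n p) ≠ 0 := by omega
    have hq_eq : q = p' := by
      rcases hval _ hxq with h | h
      · exact xv_eq_iff.mp h
      · exact absurd h (xv_ne_yv _ _)
    have hp_eq : p = q' := by
      rcases hval _ hyp with h | h
      · exact absurd h (yv_ne_xv _ _)
      · exact yv_eq_iff.mp h
    rw [← hq_eq, ← hp_eq] at hp'q'
    exact absurd (hpq.trans hp'q') (lt_irrefl _)


lemma card_pairs {G : SimpleGraph (Fin n)} [DecidableRel G.Adj] [Fintype G.edgeSet] :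
    (Finset.univ.filter fun pq : Fin n × Fin n => pq.1 < pq.2 ∧ G.Adj pq.1 pq.2).card
      = G.edgeFinset.card := by
  refine Finset.card_bij (fun pq _ => s(pq.1, pq.2)) ?_ ?_ ?_
  · rintro ⟨p, q⟩ hpq
    rw [Finset.mem_filter] at hpq
    rw [SimpleGraph.mem_edgeFinset, SimpleGraph.mem_edgeSet]
    exact hpq.2.2
  · rintro ⟨p1, q1⟩ h1 ⟨p2, q2⟩ h2 heq
    rw [Finset.mem_filter] at h1 h2
    rw [Sym2.eq_iff] at heq
    rcases heq with ⟨rfl, rfl⟩ | ⟨rfl, rfl⟩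
    · rfl
    · exact absurd (h1.2.1.trans h2.2.1) (lt_irrefl _)
  · intro e he
    induction e using Sym2.inductionOn with
    | hf u v =>
      rw [SimpleGraph.mem_edgeFinset, SimpleGraph.mem_edgeSet] at he
      rcases lt_or_gt_of_ne he.ne with h | h
      · exact ⟨(u, v), Finset.mem_filter.mpr ⟨Finset.mem_univ _, h, he⟩, rfl⟩
      · exact ⟨(v, u), Finset.mem_filter.mpr ⟨Finset.mem_univ _, h, he.symm⟩, Sym2.eq_swap⟩

lemma complete_edgeBinomial {G : SimpleGraph (Fin n)} (p q : Fin n)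
    (hpq : p < q) (hadj : G.Adj p q) :
    IsCompletePolynomial (binomialEdgeIdeal K G) (edgeBinomial K n p q) := by
  classical
  intro u hu v hv
  have hsupp : (edgeBinomial K n p q).support ⊆ {mA n p q, mA n q p} := by
    rw [edgeBinomial_eq]
    refine (support_sub _ _ _).trans ?_
    rw [support_monomial, if_neg (one_ne_zero (α := K)),
      support_monomial, if_neg (one_ne_zero (α := K))]
    intro x hx
    simpa using hx
  have hrel : Relation.EqvGen (Rel G) (mA n p q) (mA n q p) :=
    Relation.EqvGen.rel _ _ ⟨p, q, 0, hpq, hadj, (zero_add _).symm, (zero_add _).symm⟩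
  have hu' := hsupp hu
  have hv' := hsupp hv
  rw [Finset.mem_insert, Finset.mem_singleton] at hu' hv'
  apply mem_of_eqv K G
  rcases hu' with rfl | rfl <;> rcases hv' with rfl | rfl
  · exact Relation.EqvGen.refl _
  · exact hrel
  · exact Relation.EqvGen.symm _ _ hrel
  · exact Relation.EqvGen.refl _

end Stmt5Aux

open Stmt5Aux in
theorem stmt_5 (K : Type*) [Field K] (n : ℕ) (hn : 0 < n)
    (G : SimpleGraph (Fin n)) [DecidableRel G.Adj] (hconn : G.Connected)
    (m : ℕ) (hm : G.edgeFinset.card = m) :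
    araC (binomialEdgeIdeal K G) = m := by
  classical
  subst hm
  set E := Finset.univ.filter (fun pq : Fin n × Fin n => pq.1 < pq.2 ∧ G.Adj pq.1 pq.2) with hE
  have hcard : E.card = G.edgeFinset.card := card_pairs
  have hupper : G.edgeFinset.card ∈ {s | ∃ F : Fin s → MvPolynomial (Fin (n + n)) K,
      (∀ i, F i ∈ binomialEdgeIdeal K G ∧
        IsCompletePolynomial (binomialEdgeIdeal K G) (F i)) ∧
      (Ideal.span (Set.range F)).radical = (binomialEdgeIdeal K G).radical} := by
    set e := Finset.equivFinOfCardEq hcard with he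
    refine ⟨fun i => edgeBinomial K n ((e.symm i).1.1) ((e.symm i).1.2), ?_, ?_⟩
    · intro i
      have hmem := Finset.mem_filter.mp (e.symm i).2
      constructor
      · exact Ideal.subset_span ⟨_, _, hmem.2.1, hmem.2.2, rfl⟩
      · exact complete_edgeBinomial K _ _ hmem.2.1 hmem.2.2
    · have hset : Set.range (fun i => edgeBinomial K n ((e.symm i).1.1) ((e.symm i).1.2))
          = {f | ∃ p q : Fin n, p < q ∧ G.Adj p q ∧ f = edgeBinomial K n p q} := by
        ext x
        constructor
        · rintro ⟨i, rfl⟩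
          have hmem := Finset.mem_filter.mp (e.symm i).2
          exact ⟨_, _, hmem.2.1, hmem.2.2, rfl⟩
        · rintro ⟨p, q, h1, h2, rfl⟩
          refine ⟨e ⟨(p, q), Finset.mem_filter.mpr ⟨Finset.mem_univ _, h1, h2⟩⟩, ?_⟩
          simp only [Equiv.symm_apply_apply]
      rw [hset]
      rfl
  have hlower : ∀ s ∈ {s | ∃ F : Fin s → MvPolynomial (Fin (n + n)) K,
      (∀ i, F i ∈ binomialEdgeIdeal K G ∧
        IsCompletePolynomial (binomialEdgeIdeal K G) (F i)) ∧
      (Ideal.span (Set.range F)).radical = (binomialEdgeIdeal K G).radical},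
      G.edgeFinset.card ≤ s := by
    rintro s ⟨F, hF, hrad⟩
    rw [← hcard]
    rcases Finset.eq_empty_or_nonempty E with hEe | ⟨pq0, hpq0⟩
    · simp [hEe]
    have hserve : ∀ pq ∈ E, ∃ j, ∃ a b, 0 < a ∧ 0 < b ∧
        corner pq.1 pq.2 a b ∈ (F j).support := by
      intro pq hpq
      have hpq' := Finset.mem_filter.mp hpq
      exact exists_server K hF hrad hpq'.2.1 hpq'.2.2
    obtain ⟨j0, -⟩ := hserve pq0 hpq0
    have hch : ∀ pq : Fin n × Fin n, ∃ j : Fin s, pq ∈ E → ∃ a b, 0 < a ∧ 0 < b ∧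
        corner pq.1 pq.2 a b ∈ (F j).support := by
      intro pq
      by_cases h : pq ∈ E
      · obtain ⟨j, hj⟩ := hserve pq h
        exact ⟨j, fun _ => hj⟩
      · exact ⟨j0, fun hc => absurd hc h⟩
    choose f hf using hch
    have hinj : Set.InjOn f ↑E := by
      intro pq1 h1 pq2 h2 heq
      obtain ⟨a1, b1, ha1, hb1, hc1⟩ := hf pq1 (Finset.mem_coe.mp h1)
      obtain ⟨a2, b2, ha2, hb2, hc2⟩ := hf pq2 (Finset.mem_coe.mp h2)
      rw [heq] at hc1
      have h1' := Finset.mem_filter.mp (Finset.mem_coe.mp h1)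
      have h2' := Finset.mem_filter.mp (Finset.mem_coe.mp h2)
      obtain ⟨hp, hq⟩ := serve_unique K (hF (f pq2)).2 h1'.2.1 h2'.2.1 ha1 hb1 hc1 hc2
      exact Prod.ext hp hq
    calc E.card ≤ (Finset.univ : Finset (Fin s)).card :=
          Finset.card_le_card_of_injOn f (fun a _ => Finset.mem_univ _) hinj
      _ = s := by simp
  exact le_antisymm (Nat.sInf_le hupper) (le_csInf ⟨_, hupper⟩ hlower)
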